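/- Let E ⊆ ℝ be compact, let x_1 > x_2 > ⋯ > x_n be points of E with -1 < x_n and x_1 < 1, and let ω(x) = ∏_{k=1}^n (x - x_k). Assume ±1 ∈ E and |ω(1)| = |ω(-1)| = sup_{x∈E} |ω(x)|. Let Ω(x) = (1 - x^2)ω(x), with nodes {x_1,…,x_n, 1, -1}. Then the Lebesgue constant of Lagrange interpolation on E at the augmented nodes satisfies Λ(Ω, E) ≤ 5·Λ(ω, E) + 1, where Λ(ω, E) = sup_{x∈E} ∑_{k=1}^n |ω(x)/(ω'(x_k)(x - x_k))| and Λ(Ω, E) is defined analogously with the n+2 nodes. -/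

import Mathlib

private lemma aux_key (x1 t d w w1 wm1 : ℝ)
    (hx : -1 < x1) (hx' : x1 < 1) (ht : -1 ≤ t) (ht' : t ≤ 1)
    (hw : |w| ≤ |w1|) (hwm : |wm1| = |w1|)
    (hwt : t = x1 → w = 0) :
    (1 - t^2)/(1 - x1^2) * |w / (d * (t - x1))| ≤
      |w / (d * (t - x1))| + |w1 / (d * (1 - x1))| + |wm1 / (d * (-1 - x1))| := by
  have hp : 0 < 1 - x1 := by linarith
  have hq : 0 < 1 + x1 := by linarith
  rcases eq_or_ne d 0 with rfl | hd
  · simp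
  rcases eq_or_ne t x1 with rfl | htx
  · rw [hwt rfl]
    simp only [zero_div, abs_zero, mul_zero, zero_add]
    positivity
  have hu : 0 < |t - x1| := abs_pos.mpr (sub_ne_zero.mpr htx)
  have hD : 0 < |d| := abs_pos.mpr hd
  rw [abs_div, abs_div, abs_div, abs_mul, abs_mul, abs_mul,
    abs_of_pos hp, show |(-1:ℝ) - x1| = 1 + x1 by rw [abs_of_neg (by linarith)]; ring]
  have ht0 : t - x1 ≠ 0 := sub_ne_zero.mpr htx
  rcases le_total x1 t with hc | hc
  · rw [abs_of_nonneg (by linarith : (0:ℝ) ≤ t - x1)]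
    have h1 : (1 - t^2)/(1 - x1^2) ≤ (1 + t)/(1 + x1) := by
      rw [div_le_div_iff₀ (by nlinarith) hq]
      nlinarith [mul_le_mul_of_nonneg_left (show 1 - t ≤ 1 - x1 by linarith)
        (show (0:ℝ) ≤ 1 + t by linarith)]
    have h2 : (1 + t)/(1 + x1) * (|w| / (|d| * (t - x1)))
        = |w| / (|d| * (t - x1)) + |w| / (|d| * (1 + x1)) := by
      field_simp
      ring
    have h3 : |w| / (|d| * (1 + x1)) ≤ |wm1| / (|d| * (1 + x1)) := by
      have hwm' : |w| ≤ |wm1| := by rw [hwm]; exact hw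
      gcongr
    have h4 : (0:ℝ) ≤ |w1| / (|d| * (1 - x1)) := by positivity
    calc (1 - t^2)/(1 - x1^2) * (|w| / (|d| * (t - x1)))
        ≤ (1 + t)/(1 + x1) * (|w| / (|d| * (t - x1))) :=
          mul_le_mul_of_nonneg_right h1
            (div_nonneg (abs_nonneg _) (mul_nonneg hD.le (by linarith)))
      _ = |w| / (|d| * (t - x1)) + |w| / (|d| * (1 + x1)) := h2
      _ ≤ |w| / (|d| * (t - x1)) + |w1| / (|d| * (1 - x1)) + |wm1| / (|d| * (1 + x1)) := by
          linarith
  · have hc' : t < x1 := lt_of_le_of_ne hc htx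
    rw [abs_sub_comm, abs_of_pos (by linarith : (0:ℝ) < x1 - t)]
    have h1 : (1 - t^2)/(1 - x1^2) ≤ (1 - t)/(1 - x1) := by
      rw [div_le_div_iff₀ (by nlinarith) hp]
      nlinarith [mul_le_mul_of_nonneg_left (show 1 + t ≤ 1 + x1 by linarith)
        (show (0:ℝ) ≤ 1 - t by linarith)]
    have hx1t : x1 - t ≠ 0 := by intro h; exact htx (by linarith)
    have h2 : (1 - t)/(1 - x1) * (|w| / (|d| * (x1 - t)))
        = |w| / (|d| * (x1 - t)) + |w| / (|d| * (1 - x1)) := by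
      field_simp
      ring
    have h3 : |w| / (|d| * (1 - x1)) ≤ |w1| / (|d| * (1 - x1)) := by
      gcongr
    have h4 : (0:ℝ) ≤ |wm1| / (|d| * (1 + x1)) := by positivity
    calc (1 - t^2)/(1 - x1^2) * (|w| / (|d| * (x1 - t)))
        ≤ (1 - t)/(1 - x1) * (|w| / (|d| * (x1 - t))) :=
          mul_le_mul_of_nonneg_right h1
            (div_nonneg (abs_nonneg _) (mul_nonneg hD.le (by linarith)))
      _ = |w| / (|d| * (x1 - t)) + |w| / (|d| * (1 - x1)) := h2
      _ ≤ |w| / (|d| * (x1 - t)) + |w1| / (|d| * (1 - x1)) + |wm1| / (|d| * (1 + x1)) := by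
          linarith

theorem stmt_14 (E : Set ℝ) (hE : IsCompact E) (hE1 : E ⊆ Set.Icc (-1 : ℝ) 1)
    (h1 : (1 : ℝ) ∈ E) (hm1 : (-1 : ℝ) ∈ E)
    (n : ℕ) (x : Fin n → ℝ)
    (hxE : ∀ k, x k ∈ E) (hxI : ∀ k, x k ∈ Set.Ioo (-1 : ℝ) 1)
    (hord : ∀ i j : Fin n, i < j → x j < x i)
    (ω Ω : ℝ → ℝ)
    (hω : ∀ t, ω t = ∏ k, (t - x k))
    (hΩ : ∀ t, Ω t = (1 - t^2) * ω t)
    (hmax1 : ∀ t ∈ E, |ω t| ≤ |ω 1|)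
    (hmaxm1 : |ω (-1)| = |ω 1|)
    (Λω ΛΩ : ℝ)
    (hΛω : Λω = sSup ((fun t => ∑ k, |ω t / (deriv ω (x k) * (t - x k))|) '' E))
    (hΛΩ : ΛΩ = sSup ((fun t =>
        (∑ k, |Ω t / (deriv Ω (x k) * (t - x k))|)
        + |Ω t / (deriv Ω 1 * (t - 1))|
        + |Ω t / (deriv Ω (-1) * (t - (-1)))|) '' E)) :
    ΛΩ ≤ 5 * Λω + 1 := by
  -- ω is a polynomial, hence differentiable
  have hωq : ω = fun t => (∏ k, (Polynomial.X - Polynomial.C (x k))).eval t := by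
    funext t
    simp [hω, Polynomial.eval_prod]
  have hωd : ∀ p : ℝ, HasDerivAt ω (deriv ω p) p := by
    intro p
    have : DifferentiableAt ℝ ω p := by
      rw [hωq]; exact Polynomial.differentiableAt _
    exact this.hasDerivAt
  have hΩd : ∀ p : ℝ, HasDerivAt Ω (-2*p * ω p + (1 - p^2) * deriv ω p) p := by
    intro p
    have h2 : HasDerivAt (fun t : ℝ => 1 - t^2) (-2*p) p := by
      have := (hasDerivAt_pow 2 p).const_sub 1
      exact this.congr_deriv (by norm_num)
    have hmul := h2.mul (hωd p)
    have hfun : (fun t : ℝ => (1 - t^2) * ω t) = Ω := funext fun t => (hΩ t).symm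
    rw [← hfun]; exact hmul
  have hωz : ∀ k, ω (x k) = 0 := fun k => by
    rw [hω]; exact Finset.prod_eq_zero (Finset.mem_univ k) (sub_self _)
  have hdΩx : ∀ k, deriv Ω (x k) = (1 - (x k)^2) * deriv ω (x k) := by
    intro k
    rw [(hΩd (x k)).deriv, hωz k]; ring
  have hdΩ1 : deriv Ω 1 = -2 * ω 1 := by rw [(hΩd 1).deriv]; ring
  have hdΩm1 : deriv Ω (-1) = 2 * ω (-1) := by rw [(hΩd (-1)).deriv]; ring
  -- boundedness of the ω-Lebesgue function
  have hterm : ∀ (k : Fin n) (t : ℝ), t ∈ Set.Icc (-1:ℝ) 1 →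
      |ω t / (deriv ω (x k) * (t - x k))| ≤ 2^n / |deriv ω (x k)| := by
    intro k t ht
    rcases eq_or_ne (deriv ω (x k)) 0 with h0 | h0
    · simp [h0]
    rcases eq_or_ne t (x k) with rfl | hne
    · rw [hωz k]
      simp only [zero_div, abs_zero]
      positivity
    have hu : 0 < |t - x k| := abs_pos.mpr (sub_ne_zero.mpr hne)
    rw [abs_div, abs_mul]
    have key : |ω t| / |t - x k| ≤ 2^n := by
      rw [hω, ← Finset.mul_prod_erase Finset.univ _ (Finset.mem_univ k), abs_mul,
        mul_comm, mul_div_assoc, div_self hu.ne', mul_one]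
      calc |∏ j ∈ Finset.univ.erase k, (t - x j)|
          = ∏ j ∈ Finset.univ.erase k, |t - x j| := Finset.abs_prod _ _
        _ ≤ ∏ j ∈ Finset.univ.erase k, 2 := by
            apply Finset.prod_le_prod (fun j _ => abs_nonneg _)
            intro j _
            obtain ⟨hj1, hj2⟩ := hxI j
            obtain ⟨ht1, ht2⟩ := ht
            rw [abs_le]
            constructor <;> linarith
        _ = 2 ^ (Finset.univ.erase k).card := Finset.prod_const _
        _ ≤ 2 ^ n := by
            apply pow_le_pow_right₀ (by norm_num)
            calc (Finset.univ.erase k).card ≤ (Finset.univ : Finset (Fin n)).card :=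
                Finset.card_erase_le
              _ = n := by simp
    calc |ω t| / (|deriv ω (x k)| * |t - x k|)
        = (|ω t| / |t - x k|) / |deriv ω (x k)| := by
          rw [div_div, mul_comm]
      _ ≤ 2^n / |deriv ω (x k)| := by gcongr
  have hbdd : BddAbove ((fun t => ∑ k, |ω t / (deriv ω (x k) * (t - x k))|) '' E) := by
    refine ⟨∑ k, 2^n / |deriv ω (x k)|, ?_⟩
    rintro v ⟨t, htE, rfl⟩
    exact Finset.sum_le_sum fun k _ => hterm k t (hE1 htE)
  have hfle : ∀ s ∈ E, (∑ k, |ω s / (deriv ω (x k) * (s - x k))|) ≤ Λω := by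
    intro s hs
    rw [hΛω]
    exact le_csSup hbdd (Set.mem_image_of_mem _ hs)
  have hΛpos : 0 ≤ Λω :=
    le_trans (Finset.sum_nonneg fun k _ => abs_nonneg _) (hfle 1 h1)
  -- endpoint terms
  have hend : ∀ t ∈ E, |Ω t / (deriv Ω 1 * (t - 1))| + |Ω t / (deriv Ω (-1) * (t - (-1)))| ≤ 1 := by
    intro t htE
    obtain ⟨ht1, ht2⟩ := hE1 htE
    rcases eq_or_ne (ω 1) 0 with h0 | h0
    · have hωt : ω t = 0 := abs_eq_zero.mp
        (le_antisymm (by simpa [h0] using hmax1 t htE) (abs_nonneg _))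
      have hΩ0 : Ω t = 0 := by rw [hΩ, hωt, mul_zero]
      simp [hΩ0]
    have hωm0 : ω (-1) ≠ 0 := fun h =>
      h0 (abs_eq_zero.mp (by rw [← hmaxm1, h]; exact abs_zero))
    rcases eq_or_ne t 1 with rfl | htne1
    · have : Ω 1 = 0 := by rw [hΩ]; norm_num
      simp [this]
    rcases eq_or_ne t (-1) with rfl | htnem1
    · have : Ω (-1) = 0 := by rw [hΩ]; norm_num
      simp [this]
    rw [hdΩ1, hdΩm1, hΩ]
    have h1t : t - 1 ≠ 0 := sub_ne_zero.mpr htne1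
    have h2t : t + 1 ≠ 0 := by intro h; exact htnem1 (by linarith)
    have e1 : (1 - t^2) * ω t / (-2 * ω 1 * (t - 1)) = (1 + t) * (ω t / (2 * ω 1)) := by
      field_simp
      ring
    have e2 : (1 - t^2) * ω t / (2 * ω (-1) * (t - (-1))) = (1 - t) * (ω t / (2 * ω (-1))) := by
      field_simp
      ring
    rw [e1, e2, abs_mul, abs_mul, abs_div, abs_div,
      abs_of_nonneg (by linarith : (0:ℝ) ≤ 1 + t),
      abs_of_nonneg (by linarith : (0:ℝ) ≤ 1 - t),
      show |2 * ω 1| = 2 * |ω 1| by rw [abs_mul]; norm_num,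
      show |2 * ω (-1)| = 2 * |ω 1| by rw [abs_mul, hmaxm1]; norm_num]
    have hW : 0 < |ω 1| := abs_pos.mpr h0
    have hs : |ω t| / (2 * |ω 1|) ≤ 1/2 := by
      rw [div_le_iff₀ (by positivity)]
      have := hmax1 t htE
      linarith
    have hs0 : 0 ≤ |ω t| / (2 * |ω 1|) := by positivity
    nlinarith
  -- main per-node bound
  have hmain : ∀ t ∈ E, ∀ k : Fin n,
      |Ω t / (deriv Ω (x k) * (t - x k))| ≤
        |ω t / (deriv ω (x k) * (t - x k))| + |ω 1 / (deriv ω (x k) * (1 - x k))|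
          + |ω (-1) / (deriv ω (x k) * (-1 - x k))| := by
    intro t htE k
    obtain ⟨ht1, ht2⟩ := hE1 htE
    obtain ⟨hk1, hk2⟩ := hxI k
    have hx2 : 0 < 1 - (x k)^2 := by nlinarith
    have heq : |Ω t / (deriv Ω (x k) * (t - x k))|
        = (1 - t^2)/(1 - (x k)^2) * |ω t / (deriv ω (x k) * (t - x k))| := by
      rw [hΩ, hdΩx k, mul_assoc, mul_div_mul_comm, abs_mul,
        abs_of_nonneg (div_nonneg (by nlinarith) hx2.le)]
    rw [heq]
    exact aux_key (x k) t (deriv ω (x k)) (ω t) (ω 1) (ω (-1)) hk1 hk2 ht1 ht2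
      (hmax1 t htE) hmaxm1 (fun h => by rw [h]; exact hωz k)
  -- conclude
  rw [hΛΩ]
  apply csSup_le ⟨_, Set.mem_image_of_mem _ h1⟩
  rintro v ⟨t, htE, rfl⟩
  have hsum : (∑ k, |Ω t / (deriv Ω (x k) * (t - x k))|) ≤
      (∑ k, |ω t / (deriv ω (x k) * (t - x k))|)
      + (∑ k, |ω 1 / (deriv ω (x k) * (1 - x k))|)
      + (∑ k, |ω (-1) / (deriv ω (x k) * (-1 - x k))|) := by
    calc (∑ k, |Ω t / (deriv Ω (x k) * (t - x k))|)
        ≤ ∑ k, (|ω t / (deriv ω (x k) * (t - x k))| + |ω 1 / (deriv ω (x k) * (1 - x k))|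
            + |ω (-1) / (deriv ω (x k) * (-1 - x k))|) :=
          Finset.sum_le_sum fun k _ => hmain t htE k
      _ = _ := by rw [Finset.sum_add_distrib, Finset.sum_add_distrib]
  have hft := hfle t htE
  have hf1 := hfle 1 h1
  have hfm1 := hfle (-1) hm1
  have he := hend t htE
  have h1sum : (∑ k, |ω 1 / (deriv ω (x k) * (1 - x k))|) ≤ Λω := hf1
  have hm1sum : (∑ k, |ω (-1) / (deriv ω (x k) * (-1 - x k))|) ≤ Λω := hfm1
  linarith
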